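/- Let J be the representation of (P,θ) with J₀ = k and J_z = k^z for all z ∈ θ. Then H(J) ≅ E, the injective envelope of the simple projective right A-module e₀A; in particular dim_k E e_z = card(z) for each z ∈ θ and dim_k E e₀ = 1. -/

import Mathlib

open scoped Classical

/-! ## Posets with involution and their vector-space representations -/

structure PosetInv (P : Type) [PartialOrder P] where
  σ : P → P
  invol : ∀ x, σ (σ x) = x

namespace PosetInv

variable {P : Type} [PartialOrder P]

/-- The equivalence relation whose classes are `{x, σ x}`. -/
def r (I : PosetInv P) (x y : P) : Prop := y = x ∨ y = I.σ x

theorem r_refl (I : PosetInv P) (x : P) : I.r x x := Or.inl rfl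

theorem r_symm (I : PosetInv P) {x y : P} (h : I.r x y) : I.r y x := by
  rcases h with rfl | rfl
  · exact Or.inl rfl
  · exact Or.inr (I.invol x).symm

theorem r_trans (I : PosetInv P) {x y z : P} (h1 : I.r x y) (h2 : I.r y z) : I.r x z := by
  rcases h1 with rfl | rfl
  · exact h2
  · rcases h2 with rfl | rfl
    · exact Or.inr rfl
    · rw [I.invol]; exact Or.inl rfl

def setoid (I : PosetInv P) : Setoid P := ⟨I.r, ⟨I.r_refl, I.r_symm, I.r_trans⟩⟩

/-- The set `θ` of equivalence classes. -/
def Classes (I : PosetInv P) : Type := Quotient I.setoid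

/-- The class `[x]` of an element. -/
def cls (I : PosetInv P) (x : P) : I.Classes := Quotient.mk I.setoid x

/-- The underlying set of elements of a class. -/
def carrier (I : PosetInv P) : I.Classes → Set P :=
  Quotient.lift (fun x => {y | I.r x y}) (by
    intro a b hab
    ext y
    constructor
    · intro h; exact I.r_trans (I.r_symm hab) h
    · intro h; exact I.r_trans hab h)

theorem mem_cls (I : PosetInv P) (x : P) : x ∈ I.carrier (I.cls x) := I.r_refl x

theorem sigma_mem_cls (I : PosetInv P) (x : P) : I.σ x ∈ I.carrier (I.cls x) := Or.inr rfl

end PosetInv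

open PosetInv

/-- A vector-space representation `V = (V₀, V_z)_{z ∈ θ}` of the poset with involution
`(P, θ)`:  a finite-dimensional space `V₀` together with, for each class `z`, a subspace
`V_z ⊆ V₀^z` (functions on the class), satisfying `V_y⁺ ⊆ V_x⁻` for `y < x`. -/
structure RepI (k : Type) [Field k] {P : Type} [PartialOrder P] (I : PosetInv P) where
  V0 : Type
  [acg : AddCommGroup V0]
  [mod : Module k V0]
  [fd : FiniteDimensional k V0]
  Vz : ∀ z : I.Classes, Submodule k (↥(I.carrier z) → V0)
  compat : ∀ ⦃x y : P⦄, y < x → ∀ h ∈ Vz (I.cls y),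
    (fun w : ↥(I.carrier (I.cls x)) => if (w : P) = x then h ⟨y, I.mem_cls y⟩ else 0)
      ∈ Vz (I.cls x)

attribute [instance] RepI.acg RepI.mod RepI.fd

variable {k : Type} [Field k] {P : Type} [PartialOrder P] {I : PosetInv P}

/-- A morphism of representations:  a linear map `φ : V₀ → W₀` with `φ^z(V_z) ⊆ W_z`. -/
@[ext]
structure Hom (V W : RepI k I) where
  φ : V.V0 →ₗ[k] W.V0
  maps : ∀ z, ∀ h ∈ V.Vz z, (fun w => φ (h w)) ∈ W.Vz z

namespace Hom

def comp {U V W : RepI k I} (g : Hom V W) (f : Hom U V) : Hom U W :=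
  ⟨g.φ ∘ₗ f.φ, fun z h hh => g.maps z _ (f.maps z h hh)⟩

def idH (V : RepI k I) : Hom V V := ⟨LinearMap.id, fun _ _ hh => hh⟩

def zeroH (V W : RepI k I) : Hom V W :=
  ⟨0, fun z _ _ => (W.Vz z).zero_mem⟩

end Hom

/-- `f` is a proper epimorphism:  surjective on `V₀` and on each `V_z`. -/
def ProperEpi {V W : RepI k I} (f : Hom V W) : Prop :=
  Function.Surjective f.φ ∧
    ∀ z, ∀ g ∈ W.Vz z, ∃ h ∈ V.Vz z, (fun w => f.φ (h w)) = g

/-- `f` is a proper monomorphism:  injective on `U₀`, and the elements of `V_z` all of whose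
coordinates lie in the image of `f` are exactly the images of elements of `U_z`. -/
def ProperMono {U V : RepI k I} (f : Hom U V) : Prop :=
  Function.Injective f.φ ∧
    ∀ z, ∀ h ∈ V.Vz z, (∀ w, h w ∈ LinearMap.range f.φ) →
      ∃ g ∈ U.Vz z, (fun w => f.φ (g w)) = h

/-- `(u, v)` is an `ε`-sequence:  `0 → U₀ → V₀ → W₀ → 0` and each
`0 → U_z → V_z → W_z → 0` is exact. -/
def IsEpsSeq {U V W : RepI k I} (u : Hom U V) (v : Hom V W) : Prop :=
  Function.Injective u.φ ∧ Function.Surjective v.φ ∧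
    LinearMap.range u.φ = LinearMap.ker v.φ ∧
    ∀ z, (∀ h ∈ W.Vz z, ∃ g ∈ V.Vz z, (fun w => v.φ (g w)) = h) ∧
      (∀ g ∈ V.Vz z, (fun w => v.φ (g w)) = 0 →
        ∃ p ∈ U.Vz z, (fun w => u.φ (p w)) = g)

variable {k : Type} [Field k] {P : Type} [PartialOrder P]

/-- The generating set of `P(w)_z` for a class `z = (a₁, b₁)`:  the functions
`(λ(a,a₁)e₁, 0), (0, λ(a,b₁)e₁), (λ(b,a₁)e₂, 0), (0, λ(b,b₁)e₂)`, where `e_c = g c` for `c`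
in the class of `a`; i.e. all `i_{x'} (g c)` with `c < x'`. -/
def genset (I : PosetInv P) (a : P) {V0 : Type} [AddCommGroup V0]
    (g : ↥(I.carrier (I.cls a)) → V0) (z : I.Classes) : Set (↥(I.carrier z) → V0) :=
  {f | ∃ (x' : ↥(I.carrier z)) (c : ↥(I.carrier (I.cls a))),
    (c : P) < (x' : P) ∧ f = fun w => if w = x' then g c else 0}

/-- `Q` is (isomorphic to) the representation `P(w)` for the class `w = [a]`:  there is a
basis of `Q₀` indexed by the class of `a` (so `e₁ = B a`, `e₂ = B b`, or a single `e` for a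
singleton class), `Q_w` is spanned by the generator `B` together with `genset`, and every
other `Q_z` is spanned by `genset`. -/
def IsPw {I : PosetInv P} (Q : RepI k I) (a : P) : Prop :=
  ∃ B : Module.Basis ↥(I.carrier (I.cls a)) k Q.V0,
    Q.Vz (I.cls a) = Submodule.span k ({⇑B} ∪ genset I a ⇑B (I.cls a)) ∧
    ∀ z, z ≠ I.cls a → Q.Vz z = Submodule.span k (genset I a ⇑B z)

/-- `Q` is (isomorphic to) the trivial representation `S = (k, 0)`. -/
def IsS {k : Type} [Field k] {P : Type} [PartialOrder P] {I : PosetInv P}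
    (Q : RepI k I) : Prop :=
  Module.finrank k Q.V0 = 1 ∧ ∀ z, Q.Vz z = ⊥

/-- Finite direct sums of representations, computed componentwise. -/
def dsum {k : Type} [Field k] {P : Type} [PartialOrder P] {I : PosetInv P}
    {ι : Type} [Fintype ι] (F : ι → RepI k I) : RepI k I where
  V0 := ∀ i, (F i).V0
  Vz := fun z =>
    { carrier := {h | ∀ i, (fun w => h w i) ∈ (F i).Vz z}
      add_mem' := fun hp hq i => ((F i).Vz z).add_mem (hp i) (hq i)
      zero_mem' := fun i => ((F i).Vz z).zero_mem
      smul_mem' := fun c _ hp i => ((F i).Vz z).smul_mem c (hp i) }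
  compat := by
    intro x y hxy h hh i
    have hc := (F i).compat hxy _ (hh i)
    have he : (fun w : ↥(I.carrier (I.cls x)) =>
        (if (w : P) = x then h ⟨y, I.mem_cls y⟩ else 0) i)
        = fun w : ↥(I.carrier (I.cls x)) =>
            if (w : P) = x then h ⟨y, I.mem_cls y⟩ i else 0 := by
      funext w; split <;> rfl
    show (fun w : ↥(I.carrier (I.cls x)) =>
        (if (w : P) = x then h ⟨y, I.mem_cls y⟩ else 0) i) ∈ (F i).Vz (I.cls x)
    rw [he]; exact hc

variable {k : Type} [Field k] {P : Type} [PartialOrder P] {I : PosetInv P}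

set_option synthInstance.maxHeartbeats 1000000

/-- The morphisms `V → W`, as a `k`-subspace of the space of linear maps `V₀ → W₀`. -/
def homSubmodule (V W : RepI k I) : Submodule k (V.V0 →ₗ[k] W.V0) where
  carrier := {φ | ∀ z, ∀ h ∈ V.Vz z, (fun w => φ (h w)) ∈ W.Vz z}
  add_mem' := by
    intro φ ψ hφ hψ z h hh
    have := (W.Vz z).add_mem (hφ z h hh) (hψ z h hh)
    simpa [LinearMap.add_apply, Pi.add_def] using this
  zero_mem' := fun z _ _ => (W.Vz z).zero_mem
  smul_mem' := by
    intro c φ hφ z h hh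
    have := (W.Vz z).smul_mem c (hφ z h hh)
    simpa [LinearMap.smul_apply, Pi.smul_def] using this

/-- The endomorphism algebra `End(V)` of a representation, as a subalgebra of
`End_k(V₀)`. -/
def endSubalgebra (U : RepI k I) : Subalgebra k (Module.End k U.V0) where
  carrier := {φ | ∀ z, ∀ h ∈ U.Vz z, (fun w => φ (h w)) ∈ U.Vz z}
  add_mem' := by
    intro φ ψ hφ hψ z h hh
    have := (U.Vz z).add_mem (hφ z h hh) (hψ z h hh)
    simpa [LinearMap.add_apply, Pi.add_def] using this
  mul_mem' := fun hφ hψ z h hh => hφ z _ (hψ z h hh)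
  one_mem' := fun _ _ hh => hh
  zero_mem' := fun z _ _ => (U.Vz z).zero_mem
  algebraMap_mem' := by
    intro c z h hh
    have := (U.Vz z).smul_mem c hh
    simpa [Pi.smul_def] using this

/-- Right action of `End(U)` on `Hom(U, V)` by precomposition, making `Hom(U, V)` a right
`End(U)`-module. -/
instance homModule (U V : RepI k I) :
    Module (↥(endSubalgebra U))ᵐᵒᵖ ↥(homSubmodule U V) where
  smul a f := ⟨f.1 ∘ₗ (a.unop : Module.End k U.V0),
    fun z h hh => f.2 z _ ((a.unop).2 z h hh)⟩
  one_smul f := Subtype.ext (by ext x; rfl)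
  mul_smul a b f := Subtype.ext (by ext x; rfl)
  smul_zero a := Subtype.ext (by ext x; rfl)
  smul_add a f g := Subtype.ext (by ext x; rfl)
  add_smul a b f := Subtype.ext (by ext x; exact map_add f.1 _ _)
  zero_smul f := Subtype.ext (by ext x; exact map_zero f.1)

/-- The socle of a module:  the sum of all its simple submodules. -/
def socle (R : Type) [Ring R] (M : Type) [AddCommGroup M] [Module R M] :
    Submodule R M :=
  sSup {S : Submodule R M | IsSimpleModule R ↥S}

/-- The idempotent of `End(⊕ᵢ F i)` given by projection onto the summand `i₀`. -/
noncomputable def projHom {ι : Type} [Fintype ι] (F : ι → RepI k I) (i₀ : ι) :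
    ↥(endSubalgebra (dsum F)) := by
  refine ⟨{ toFun := fun v j => if j = i₀ then v j else 0
            map_add' := ?_
            map_smul' := ?_ }, ?_⟩
  · intro v w; funext j
    show (if j = i₀ then (v + w) j else 0)
        = (if j = i₀ then v j else 0) + (if j = i₀ then w j else 0)
    by_cases h : j = i₀
    · simp only [if_pos h]; rfl
    · simp only [if_neg h, add_zero]
  · intro c v; funext j
    show (if j = i₀ then (c • v) j else 0) = c • (if j = i₀ then v j else 0)
    by_cases h : j = i₀
    · simp only [if_pos h]; rfl
    · simp only [if_neg h, smul_zero]
  · intro z h hh i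
    by_cases hi : i = i₀
    · subst hi
      have he : (fun w => (fun j => if j = i then h w j else 0) i) = fun w => h w i := by
        funext w; simp
      show (fun w => (fun j => if j = i then h w j else 0) i) ∈ (F i).Vz z
      rw [he]; exact hh i
    · have he : (fun w => (fun j => if j = i₀ then h w j else 0) i)
          = fun _ => (0 : (F i).V0) := by
        funext w; simp [hi]
      show (fun w => (fun j => if j = i₀ then h w j else 0) i) ∈ (F i).Vz z
      rw [he]; exact ((F i).Vz z).zero_mem

/-- The socle of `Hom(U, V)` is stable under the `k`-action, so it is in particular a
`k`-subspace of `Hom(U, V)`;  this is that subspace. -/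
noncomputable def socK (U V : RepI k I) : Submodule k ↥(homSubmodule U V) where
  carrier := {f | f ∈ socle (↥(endSubalgebra U))ᵐᵒᵖ ↥(homSubmodule U V)}
  add_mem' := fun ha hb => (socle _ _).add_mem ha hb
  zero_mem' := (socle _ _).zero_mem
  smul_mem' := by
    intro c f hf
    have h1 : c • f = (MulOpposite.op
        (⟨algebraMap k (Module.End k U.V0) c, (endSubalgebra U).algebraMap_mem c⟩ :
          ↥(endSubalgebra U))) • f := by
      apply Subtype.ext
      ext x
      show c • (f.1 x) = f.1 (c • x)
      rw [map_smul]
    rw [h1]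
    exact Submodule.smul_mem
      (socle (↥(endSubalgebra U))ᵐᵒᵖ ↥(homSubmodule U V)) _ hf

/-- The action of the functor `H = Hom(⊕P(z) ⊕ S, −)` on a morphism `f : V → W`:  the
induced map `Hom(U, V) → Hom(U, W)` of right `End(U)`-modules. -/
noncomputable def Hmap (U : RepI k I) {V W : RepI k I} (f : ↥(homSubmodule V W)) :
    ↥(homSubmodule U V) →ₗ[(↥(endSubalgebra U))ᵐᵒᵖ] ↥(homSubmodule U W) where
  toFun g := ⟨f.1 ∘ₗ g.1, fun z h hh => f.2 z _ (g.2 z h hh)⟩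
  map_add' := by intro g₁ g₂; apply Subtype.ext; ext x; exact map_add f.1 _ _
  map_smul' := by intro a g; apply Subtype.ext; ext x; rfl

/-- Right multiplication by `a ∈ End(U)` on `Hom(U, V)`, as a `k`-linear map. -/
noncomputable def rmulK {U V : RepI k I} (a : ↥(endSubalgebra U)) :
    ↥(homSubmodule U V) →ₗ[k] ↥(homSubmodule U V) where
  toFun f := ⟨f.1 ∘ₗ (a : Module.End k U.V0), fun z h hh => f.2 z _ (a.2 z h hh)⟩
  map_add' := by intro f g; apply Subtype.ext; ext x; rfl
  map_smul' := by intro c f; apply Subtype.ext; ext x; rfl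

noncomputable instance classesFintype {P : Type} [PartialOrder P] [Fintype P]
    (I : PosetInv P) : Fintype I.Classes :=
  @Quotient.fintype P _ I.setoid fun _ _ => Classical.propDecidable _

/-- The representation `J` with `J₀ = k` and `J_z = k^z` for all `z ∈ θ`. -/
def JRep (k : Type) [Field k] {P : Type} [PartialOrder P] (I : PosetInv P) :
    RepI k I where
  V0 := k
  Vz := fun _ => ⊤
  compat := fun _ _ _ _ _ => Submodule.mem_top


/-! ### Auxiliary machinery for the proof of Statement 15 -/

section EnvelopeHelpers

variable {k : Type} [Field k] {P : Type} [PartialOrder P] [Fintype P] {I : PosetInv P}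
variable (F : I.Classes ⊕ Unit → RepI k I)

/-- Embed a linear functional on `U₀` as an element of `H(J)` (the conditions are vacuous
since `J_z = ⊤`). -/
noncomputable def toMJ (φ : (dsum F).V0 →ₗ[k] k) : ↥(homSubmodule (dsum F) (JRep k I)) :=
  ⟨φ, fun _ _ _ => trivial⟩

/-- The endomorphism `ψ_v : u ↦ e(u_{S}) • v` of `U₀`. -/
noncomputable def psiE (e : (F (Sum.inr ())).V0 →ₗ[k] k) (v : (dsum F).V0) :
    Module.End k (dsum F).V0 where
  toFun u := e (u (Sum.inr ())) • v
  map_add' u w := by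
    show e (u (Sum.inr ()) + w (Sum.inr ())) • v = _
    rw [map_add, add_smul]
  map_smul' c u := by
    show e (c • u (Sum.inr ())) • v = _
    rw [map_smul, RingHom.id_apply, smul_assoc]

theorem psiE_mem (hS : ∀ z, (F (Sum.inr ())).Vz z = ⊥)
    (e : (F (Sum.inr ())).V0 →ₗ[k] k) (v : (dsum F).V0) :
    psiE F e v ∈ endSubalgebra (dsum F) := by
  intro z h hh
  have h0 : (fun w => h w (Sum.inr ())) = 0 := by
    have := hh (Sum.inr ())
    rwa [hS z, Submodule.mem_bot] at this
  have h1 : (fun w => psiE F e v (h w)) = fun _ => 0 := by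
    funext w
    show e (h w (Sum.inr ())) • v = 0
    rw [show h w (Sum.inr ()) = 0 from congrFun h0 w, map_zero, zero_smul]
  rw [h1]
  exact ((dsum F).Vz z).zero_mem

/-- `ψ_v` as an element of `A = End(U)`. -/
noncomputable def psiA (hS : ∀ z, (F (Sum.inr ())).Vz z = ⊥)
    (e : (F (Sum.inr ())).V0 →ₗ[k] k) (v : (dsum F).V0) :
    ↥(endSubalgebra (dsum F)) :=
  ⟨psiE F e v, psiE_mem F hS e v⟩

theorem psiA_add (hS : ∀ z, (F (Sum.inr ())).Vz z = ⊥)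
    (e : (F (Sum.inr ())).V0 →ₗ[k] k) (v w : (dsum F).V0) :
    psiA F hS e (v + w) = psiA F hS e v + psiA F hS e w :=
  Subtype.ext (LinearMap.ext fun u => smul_add (e (u (Sum.inr ()))) v w)

theorem psiA_smul (hS : ∀ z, (F (Sum.inr ())).Vz z = ⊥)
    (e : (F (Sum.inr ())).V0 →ₗ[k] k) (c : k) (v : (dsum F).V0) :
    psiA F hS e (c • v) = psiA F hS e v * algebraMap k ↥(endSubalgebra (dsum F)) c := by
  apply Subtype.ext
  apply LinearMap.ext
  intro u
  show e (u (Sum.inr ())) • (c • v)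
      = psiE F e v ((algebraMap k (Module.End k (dsum F).V0) c) u)
  rw [Module.algebraMap_end_apply]
  show e (u (Sum.inr ())) • (c • v) = e ((c • u) (Sum.inr ())) • v
  rw [show (c • u) (Sum.inr ()) = c • u (Sum.inr ()) from rfl, map_smul,
    smul_assoc, smul_comm]

theorem mul_psiA (hS : ∀ z, (F (Sum.inr ())).Vz z = ⊥)
    (e : (F (Sum.inr ())).V0 →ₗ[k] k) (a : ↥(endSubalgebra (dsum F)))
    (v : (dsum F).V0) :
    a * psiA F hS e v = psiA F hS e (a.1 v) :=
  Subtype.ext (LinearMap.ext fun u => by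
    show a.1 (e (u (Sum.inr ())) • v) = e (u (Sum.inr ())) • a.1 v
    exact map_smul a.1 _ v)

theorem projHom_apply (i : I.Classes ⊕ Unit) (u : (dsum F).V0) (j : I.Classes ⊕ Unit) :
    (projHom F i).1 u j = if j = i then u j else 0 := by
  unfold projHom
  by_cases h : j = i
  · rw [if_pos h]; exact if_pos h
  · rw [if_neg h]; exact if_neg h

theorem projHom_idem (i : I.Classes ⊕ Unit) :
    projHom F i * projHom F i = projHom F i :=
  Subtype.ext (LinearMap.ext fun u => by
    funext j
    have h0 : (projHom F i * projHom F i).1 u j = (projHom F i).1 ((projHom F i).1 u) j := rfl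
    rw [h0, projHom_apply, projHom_apply]
    by_cases h : j = i <;> simp [h])

set_option maxHeartbeats 1000000 in
theorem mem_span_projHom_e0 {x : ↥(endSubalgebra (dsum F))}
    (hx : x ∈ Submodule.span (↥(endSubalgebra (dsum F)))ᵐᵒᵖ {projHom F (Sum.inr ())}) :
    projHom F (Sum.inr ()) * x = x := by
  have hle : Submodule.span (↥(endSubalgebra (dsum F)))ᵐᵒᵖ {projHom F (Sum.inr ())} ≤
      { carrier := {y | projHom F (Sum.inr ()) * y = y}
        add_mem' := by
          intro a b ha hb
          have ha' : projHom F (Sum.inr ()) * a = a := ha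
          have hb' : projHom F (Sum.inr ()) * b = b := hb
          show projHom F (Sum.inr ()) * (a + b) = a + b
          rw [mul_add, ha', hb']
        zero_mem' := mul_zero _
        smul_mem' := by
          intro c y hy
          have hy' : projHom F (Sum.inr ()) * y = y := hy
          show projHom F (Sum.inr ()) * (c • y) = c • y
          rw [MulOpposite.smul_eq_mul_unop, ← mul_assoc, hy'] } := by
    rw [Submodule.span_le]
    intro y hy
    rw [Set.mem_singleton_iff] at hy
    subst hy
    exact projHom_idem F _
  exact hle hx

/-- The embedding of the dual of `(F i).V0` into `H(J)` through the `i`-th projection. -/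
noncomputable def PhiDual (i : I.Classes ⊕ Unit) :
    ((F i).V0 →ₗ[k] k) →ₗ[k] ↥(homSubmodule (dsum F) (JRep k I)) where
  toFun lam := toMJ F (lam.comp (LinearMap.proj (φ := fun j => (F j).V0) i))
  map_add' a b := Subtype.ext (LinearMap.ext fun u => rfl)
  map_smul' c a := Subtype.ext (LinearMap.ext fun u => rfl)

theorem PhiDual_injective (i : I.Classes ⊕ Unit) : Function.Injective (PhiDual F i) := by
  intro a b hab
  refine LinearMap.ext fun x => ?_
  have h : a (Pi.single (M := fun j => (F j).V0) i x i)
      = b (Pi.single (M := fun j => (F j).V0) i x i) :=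
    congrArg (fun f : ↥(homSubmodule (dsum F) (JRep k I)) => f.1 (Pi.single i x)) hab
  simpa using h

theorem range_rmulK_projHom (i : I.Classes ⊕ Unit) :
    LinearMap.range (rmulK (V := JRep k I) (projHom F i))
      = LinearMap.range (PhiDual F i) := by
  apply le_antisymm
  · rintro y ⟨f, rfl⟩
    refine ⟨f.1.comp (LinearMap.single k (fun j => (F j).V0) i), ?_⟩
    apply Subtype.ext; apply LinearMap.ext; intro u
    show f.1 (Pi.single i (u i)) = f.1 ((projHom F i).1 u)
    congr 1
    funext j
    rw [projHom_apply]
    by_cases h : j = i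
    · subst h; simp
    · simp [Pi.single_eq_of_ne h, h]
  · rintro y ⟨lam, rfl⟩
    refine ⟨toMJ F (lam.comp (LinearMap.proj (φ := fun j => (F j).V0) i)), ?_⟩
    apply Subtype.ext; apply LinearMap.ext; intro u
    show lam (((projHom F i).1 u) i) = lam (u i)
    rw [projHom_apply]
    simp

theorem finrank_range_rmulK (i : I.Classes ⊕ Unit) :
    Module.finrank k ↥(LinearMap.range (rmulK (V := JRep k I) (projHom F i)))
      = Module.finrank k (F i).V0 := by
  rw [range_rmulK_projHom]
  rw [← LinearEquiv.finrank_eq (LinearEquiv.ofInjective _ (PhiDual_injective F i))]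
  exact Subspace.dual_finrank_eq

end EnvelopeHelpers

set_option maxHeartbeats 2000000

/-- Let `U = ⊕_{z∈θ}P(z) ⊕ S`, `A = End(U)`, and let `J` be the
representation with `J₀ = k`, `J_z = k^z`.  Then `H(J) ≅ E`, the injective envelope of the
simple projective right `A`-module `e₀A`:  `H(J)` is an injective right `A`-module
containing a copy of `e₀A` as an essential submodule.  Moreover
`dim_k E e_z = card(z)` for each `z ∈ θ` and `dim_k E e₀ = 1`. -/
theorem HJ_injective_envelope
    {k : Type} [Field k] {P : Type} [PartialOrder P] [Fintype P] {I : PosetInv P}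
    (F : I.Classes ⊕ Unit → RepI k I)
    (hF1 : ∀ z : I.Classes, ∃ a : P, I.cls a = z ∧ IsPw (F (Sum.inl z)) a)
    (hF2 : IsS (F (Sum.inr ()))) :
    -- `H(J)` is injective
    Module.Injective (↥(endSubalgebra (dsum F)))ᵐᵒᵖ ↥(homSubmodule (dsum F) (JRep k I)) ∧
    -- `H(J)` is an injective envelope of `e₀A`:  it contains `e₀A` essentially
    (∃ ι : ↥(Submodule.span (↥(endSubalgebra (dsum F)))ᵐᵒᵖ {projHom F (Sum.inr ())})
        →ₗ[(↥(endSubalgebra (dsum F)))ᵐᵒᵖ] ↥(homSubmodule (dsum F) (JRep k I)),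
      Function.Injective ι ∧
      ∀ N : Submodule (↥(endSubalgebra (dsum F)))ᵐᵒᵖ ↥(homSubmodule (dsum F) (JRep k I)),
        N ≠ ⊥ → N ⊓ LinearMap.range ι ≠ ⊥) ∧
    -- `dim_k E e_z = card z` and `dim_k E e₀ = 1`
    (∀ z : I.Classes,
      Module.finrank k
        ↥(LinearMap.range (rmulK (V := JRep k I) (projHom F (Sum.inl z))))
        = Nat.card ↥(I.carrier z)) ∧
    Module.finrank k
      ↥(LinearMap.range (rmulK (V := JRep k I) (projHom F (Sum.inr ())))) = 1 := by
    classical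
  obtain ⟨hS1, hS2⟩ := hF2
  obtain ⟨e⟩ : Nonempty ((F (Sum.inr ())).V0 ≃ₗ[k] k) :=
    ⟨(Module.finBasisOfFinrankEq k (F (Sum.inr ())).V0 hS1).equivFun.trans
      (LinearEquiv.funUnique (Fin 1) k k)⟩
  obtain ⟨v0, hv0r⟩ : ∃ v0 : (dsum F).V0, v0 (Sum.inr ()) = e.symm 1 :=
    ⟨Function.update 0 (Sum.inr ()) (e.symm 1), Function.update_self _ _ _⟩
  have hpsi_v0 : ∀ v, psiE F e.toLinearMap v v0 = v := by
    intro v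
    show e (v0 (Sum.inr ())) • v = v
    rw [hv0r, e.apply_symm_apply, one_smul]
  refine ⟨?_, ?_, ?_, ?_⟩
  · -- `H(J)` is injective
    constructor
    intro X Y _ _ _ _ iXY hinj f
    letI mX : Module k X := Module.compHom X (algebraMap k (↥(endSubalgebra (dsum F)))ᵐᵒᵖ)
    letI mY : Module k Y := Module.compHom Y (algebraMap k (↥(endSubalgebra (dsum F)))ᵐᵒᵖ)
    set i' : X →ₗ[k] Y :=
      { toFun := iXY
        map_add' := iXY.map_add
        map_smul' := fun c x => iXY.map_smul (algebraMap k _ c) x } with hi'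
    have hinj' : Function.Injective i' := hinj
    set lam : X →ₗ[k] k :=
      { toFun := fun x => (f x).1 v0
        map_add' := fun a b => by
          show (f (a + b)).1 v0 = (f a).1 v0 + (f b).1 v0
          rw [map_add]; rfl
        map_smul' := fun c x => by
          show (f ((algebraMap k (↥(endSubalgebra (dsum F)))ᵐᵒᵖ c) • x)).1 v0
              = c • (f x).1 v0
          rw [map_smul]
          show (f x).1 (((algebraMap k (↥(endSubalgebra (dsum F)))ᵐᵒᵖ c).unop :
            ↥(endSubalgebra (dsum F))).1 v0) = c • (f x).1 v0
          have h1 : (((algebraMap k (↥(endSubalgebra (dsum F)))ᵐᵒᵖ c).unop :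
              ↥(endSubalgebra (dsum F))).1 v0) = c • v0 := rfl
          rw [h1, map_smul] } with hlam
    obtain ⟨Lam, hLam⟩ := LinearMap.exists_extend
      (lam.comp (LinearEquiv.ofInjective i' hinj').symm.toLinearMap)
    have hL : ∀ x, Lam (iXY x) = lam x := by
      intro x
      show Lam (i' x) = lam x
      have h2 := LinearMap.congr_fun hLam (LinearEquiv.ofInjective i' hinj' x)
      simpa using h2
    have hkey : ∀ (r : (↥(endSubalgebra (dsum F)))ᵐᵒᵖ) (v : (dsum F).V0) (y : Y),
        MulOpposite.op (psiA F hS2 e.toLinearMap v) • (r • y)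
          = MulOpposite.op (psiA F hS2 e.toLinearMap ((r.unop).1 v)) • y := by
      intro r v y
      have h3 : MulOpposite.op (psiA F hS2 e.toLinearMap v) * r
          = MulOpposite.op (psiA F hS2 e.toLinearMap ((r.unop).1 v)) := by
        apply MulOpposite.unop_injective
        rw [MulOpposite.unop_mul, MulOpposite.unop_op, MulOpposite.unop_op, mul_psiA]
      rw [← mul_smul, h3]
    refine ⟨{
        toFun := fun y => toMJ F
          ({ toFun := fun v =>
                Lam (MulOpposite.op (psiA F hS2 e.toLinearMap v) • y)
             map_add' := fun v w => by
               show Lam (MulOpposite.op (psiA F hS2 e.toLinearMap (v + w)) • y)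
                 = Lam (MulOpposite.op (psiA F hS2 e.toLinearMap v) • y)
                   + Lam (MulOpposite.op (psiA F hS2 e.toLinearMap w) • y)
               rw [psiA_add, MulOpposite.op_add, add_smul, map_add]
             map_smul' := fun c v => by
               show Lam (MulOpposite.op (psiA F hS2 e.toLinearMap (c • v)) • y)
                 = c • Lam (MulOpposite.op (psiA F hS2 e.toLinearMap v) • y)
               rw [psiA_smul, MulOpposite.op_mul,
                 ← MulOpposite.algebraMap_apply, mul_smul]
               rw [show (algebraMap k (↥(endSubalgebra (dsum F)))ᵐᵒᵖ c)
                   • (MulOpposite.op (psiA F hS2 e.toLinearMap v) • y)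
                   = c • (MulOpposite.op (psiA F hS2 e.toLinearMap v) • y) from rfl]
               rw [map_smul] } : (dsum F).V0 →ₗ[k] k)
        map_add' := fun y z => Subtype.ext (LinearMap.ext fun v => by
          show Lam (MulOpposite.op (psiA F hS2 e.toLinearMap v) • (y + z)) = _
          rw [smul_add, map_add]
          rfl)
        map_smul' := fun r y => Subtype.ext (LinearMap.ext fun v =>
          congrArg Lam (hkey r v y)) }, ?_⟩
    intro x
    apply Subtype.ext; apply LinearMap.ext; intro v
    show Lam (MulOpposite.op (psiA F hS2 e.toLinearMap v) • iXY x) = (f x).1 v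
    rw [← map_smul iXY, hL]
    show (f (MulOpposite.op (psiA F hS2 e.toLinearMap v) • x)).1 v0 = (f x).1 v
    rw [map_smul]
    show (f x).1 (psiE F e.toLinearMap v v0) = (f x).1 v
    rw [hpsi_v0]
  · -- essential extension of `e₀A`
    set Phi : ↥(endSubalgebra (dsum F))
        →ₗ[(↥(endSubalgebra (dsum F)))ᵐᵒᵖ] ↥(homSubmodule (dsum F) (JRep k I)) :=
      { toFun := fun a => toMJ F
          ((e.toLinearMap.comp (LinearMap.proj (φ := fun j => (F j).V0) (Sum.inr ()))).comp a.1)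
        map_add' := fun a b => Subtype.ext (LinearMap.ext fun u => by
          show e (((a + b : ↥(endSubalgebra (dsum F))).1 u) (Sum.inr ())) = _
          rw [show ((a + b : ↥(endSubalgebra (dsum F))).1 u) (Sum.inr ())
              = a.1 u (Sum.inr ()) + b.1 u (Sum.inr ()) from rfl, map_add]
          rfl)
        map_smul' := fun r a => Subtype.ext (LinearMap.ext fun u => rfl) } with hPhi
    refine ⟨Phi.comp (Submodule.subtype _), ?_, ?_⟩
    · rw [injective_iff_map_eq_zero]
      intro x hx
      have hm : projHom F (Sum.inr ()) * x.1 = x.1 := mem_span_projHom_e0 F x.2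
      have h1 : ∀ u, (x.1.1 u) (Sum.inr ()) = 0 := by
        intro u
        have h2 : e ((x.1.1 u) (Sum.inr ()))
            = (0 : ↥(homSubmodule (dsum F) (JRep k I))).1 u :=
          congrArg (fun g : ↥(homSubmodule (dsum F) (JRep k I)) => g.1 u) hx
        apply e.injective
        rw [h2]
        show (0 : k) = e 0
        rw [map_zero]
      apply Subtype.ext; apply Subtype.ext; apply LinearMap.ext; intro u
      funext j
      have h4 : (projHom F (Sum.inr ()) * x.1).1 u j = x.1.1 u j :=
        congrArg (fun y : ↥(endSubalgebra (dsum F)) => y.1 u j) hm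
      have h5 : (projHom F (Sum.inr ()) * x.1).1 u j
          = if j = Sum.inr () then x.1.1 u j else 0 := projHom_apply F _ _ _
      rw [← h4, h5]
      by_cases hj : j = Sum.inr ()
      · rw [if_pos hj]; subst hj; exact h1 u
      · rw [if_neg hj]; rfl
    · intro N hN
      rw [Submodule.ne_bot_iff] at hN ⊢
      obtain ⟨g, hgN, hg0⟩ := hN
      have hv : ∃ v, g.1 v ≠ 0 := by
        by_contra h
        push_neg at h
        exact hg0 (Subtype.ext (LinearMap.ext fun v => h v))
      obtain ⟨v, hv⟩ := hv
      obtain ⟨c, hc⟩ : ∃ c : k, g.1 v = c := ⟨g.1 v, rfl⟩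
      refine ⟨MulOpposite.op (psiA F hS2 e.toLinearMap v) • g, ?_, ?_⟩
      · refine Submodule.mem_inf.mpr ⟨Submodule.smul_mem N _ hgN, ?_⟩
        have hmem : projHom F (Sum.inr ())
            * algebraMap k ↥(endSubalgebra (dsum F)) c
            ∈ Submodule.span (↥(endSubalgebra (dsum F)))ᵐᵒᵖ {projHom F (Sum.inr ())} := by
          rw [show projHom F (Sum.inr ()) * algebraMap k ↥(endSubalgebra (dsum F)) c
              = MulOpposite.op (algebraMap k ↥(endSubalgebra (dsum F)) c)
                • projHom F (Sum.inr ()) from rfl]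
          exact Submodule.smul_mem _ _ (Submodule.mem_span_singleton_self _)
        refine ⟨⟨_, hmem⟩, ?_⟩
        apply Subtype.ext; apply LinearMap.ext; intro u
        show e (((projHom F (Sum.inr ())
            * algebraMap k ↥(endSubalgebra (dsum F)) c).1 u) (Sum.inr ()))
          = g.1 (psiE F e.toLinearMap v u)
        have hL1 : ((projHom F (Sum.inr ())
            * algebraMap k ↥(endSubalgebra (dsum F)) c).1 u) (Sum.inr ())
            = c • (u (Sum.inr ())) := by
          have := projHom_apply F (Sum.inr ()) (c • u) (Sum.inr ())
          rw [if_pos rfl] at this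
          exact this
        rw [hL1, map_smul]
        show c * e (u (Sum.inr ())) = g.1 (e (u (Sum.inr ())) • v)
        rw [map_smul, hc]
        show c * e (u (Sum.inr ())) = e (u (Sum.inr ())) * c
        exact mul_comm _ _
      · intro h0
        apply hv
        rw [← hpsi_v0 v]
        exact congrArg
          (fun y : ↥(homSubmodule (dsum F) (JRep k I)) => y.1 v0) h0
  · -- `dim_k E e_z = card z`
    intro z
    obtain ⟨a, ha, B, hB1, hB2⟩ := hF1 z
    have hfr : Module.finrank k (F (Sum.inl z)).V0 = Nat.card ↥(I.carrier z) := by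
      subst ha
      rw [Module.finrank_eq_card_basis B]
      exact (Nat.card_eq_fintype_card).symm
    rw [finrank_range_rmulK, hfr]
  · -- `dim_k E e₀ = 1`
    rw [finrank_range_rmulK]
    exact hS1
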